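/- Regret additivity for pruning: if observation sequences o_1,...,o_n are pruned and the regret of pruning o_j is at most P(o_j)·Λ (probability of the sequence times the maximal value range over it), and Σ_j P(o_j)·Λ ≤ φ, then the value of the policy found while ignoring these sequences is within φ of the value of the ε-locally optimal policy over the full neighborhood. -/
import Mathlib


/-- Regret additivity for pruning. The value of a policy decomposes as
`V(π) = Σ_o P(o)·Vc(π,o)` over disjoint observation-sequence events `o`; conditional
values have range at most `Λ`. If `π*` differs from `π` only on the pruned sequences,
and the total pruning regret satisfies `Σ_{o ∈ 𝒫} P(o)·Λ ≤ φ`, then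
`V(π*) − V(π) ≤ Σ_{o ∈ 𝒫} P(o)·Λ ≤ φ`. -/
theorem stmt13 {Pol : Type*} {O : Type*} [Fintype O]
    (P : O → ℝ) (hP0 : ∀ o, 0 ≤ P o) (hP1 : (∑ o, P o) ≤ 1)
    (Λ φ : ℝ) (hΛ : 0 ≤ Λ) (hφ : 0 < φ)
    (Vc : Pol → O → ℝ) (V : Pol → ℝ)
    (hV : ∀ π, V π = ∑ o, P o * Vc π o)
    (hrange : ∀ π π' o, Vc π o - Vc π' o ≤ Λ)
    (pruned : Finset O)
    (hregret : (∑ o ∈ pruned, P o * Λ) ≤ φ)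
    (π πstar : Pol)
    (hagree : ∀ o ∉ pruned, Vc πstar o = Vc π o) :
    V πstar - V π ≤ (∑ o ∈ pruned, P o * Λ) ∧ V πstar - V π ≤ φ := by
  have key : V πstar - V π ≤ ∑ o ∈ pruned, P o * Λ := by
    rw [hV, hV, ← Finset.sum_sub_distrib]
    have : ∀ o : O, P o * Vc πstar o - P o * Vc π o
        = P o * (Vc πstar o - Vc π o) := by intro o; ring
    simp_rw [this]
    rw [← Finset.sum_subset (Finset.subset_univ pruned)]
    · exact Finset.sum_le_sum fun o _ =>
        mul_le_mul_of_nonneg_left (hrange πstar π o) (hP0 o)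
    · intro o _ ho
      rw [hagree o ho]; ring
  exact ⟨key, key.trans hregret⟩
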